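/- (The new lower bound dominates the classical bounds.) Suppose V is partitioned into parts G_1, …, G_m that are totally ordered by reachability: for all i < j and all u ∈ G_i, v ∈ G_j, r* u v holds. Then Σ_{i=1}^{m} max( CPLen(G_i), TWork(G_i) ) ≥ max( CPLen(V), TWork(V) ). -/

import Mathlib

/-- Critical-path length of the set `S`: the supremum of the sums of durations
over `r`-paths all of whose tasks lie in `S` (`0` if `S` is empty). -/
noncomputable def CPLen {V : Type*} (r : V → V → Prop) (dur : V → ℝ) (S : Set V) : ℝ :=
  sSup {x | ∃ l : List V, l.Chain' r ∧ (∀ v ∈ l, v ∈ S) ∧ x = (l.map dur).sum}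

/-- Total work of the tasks in `S`, normalized by the capacity `C`. -/
noncomputable def TWork {V : Type*} (dur dem : V → ℝ) (C : ℝ) (S : Finset V) : ℝ :=
  (∑ v ∈ S, dur v * dem v) / C

/-- **The new lower bound dominates the classical bounds.**
If the acyclic DAG `V` is partitioned into nonempty parts `G 0, …, G (m-1)`
totally ordered by reachability, then
`∑ i, max (CPLen (G i)) (TWork (G i)) ≥ max (CPLen V) (TWork V)`. -/
theorem newLB_dominates_classical {V : Type*} [Fintype V] [Nonempty V]
    (r : V → V → Prop) (dur dem : V → ℝ) (C : ℝ)
    (hdur : ∀ v, 0 ≤ dur v) (hdem : ∀ v, 0 ≤ dem v) (hC : 0 < C)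
    (hacyc : ∀ v : V, ¬ Relation.TransGen r v v)
    (m : ℕ) (G : Fin m → Finset V)
    (hne : ∀ i, (G i).Nonempty)
    (hdisj : ∀ i j, i ≠ j → Disjoint (G i) (G j))
    (hcover : ∀ v : V, ∃ i, v ∈ G i)
    (hord : ∀ i j : Fin m, i < j →
      ∀ u ∈ G i, ∀ v ∈ G j, Relation.ReflTransGen r u v) :
    max (CPLen r dur Set.univ) (TWork dur dem C Finset.univ) ≤
      ∑ i, max (CPLen r dur (↑(G i))) (TWork dur dem C (G i)) := by
  classical
  -- index of the part containing v
  set idx : V → Fin m := fun v => (hcover v).choose with hidxdef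
  have hidx : ∀ v, v ∈ G (idx v) := fun v => (hcover v).choose_spec
  have hidx_uniq : ∀ v i, v ∈ G i → idx v = i := by
    intro v i hv
    by_contra h
    exact (Finset.disjoint_left.mp (hdisj _ _ h)) (hidx v) hv
  -- indices are monotone along edges
  have hmono : ∀ u w, r u w → idx u ≤ idx w := by
    intro u w huw
    by_contra h
    push_neg at h
    exact hacyc u (Relation.TransGen.head' huw (hord _ _ h w (hidx w) u (hidx u)))
  -- chains have no duplicate elements
  have hnodup : ∀ l : List V, l.Chain' r → l.Nodup := by
    intro l hl
    have : l.Chain' (Relation.TransGen r) := hl.imp fun _ _ h => Relation.TransGen.single h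
    have hp : l.Pairwise (Relation.TransGen r) := List.isChain_iff_pairwise.mp this
    exact hp.imp fun h => by rintro rfl; exact hacyc _ h
  -- the defining set of CPLen is bounded above
  have hbdd : ∀ S : Set V, BddAbove {x | ∃ l : List V, l.Chain' r ∧ (∀ v ∈ l, v ∈ S) ∧ x = (l.map dur).sum} := by
    intro S
    refine ⟨∑ v, dur v, ?_⟩
    rintro x ⟨l, hl, -, rfl⟩
    have hnd := hnodup l hl
    have h1 : (l.map dur).sum = ∑ v ∈ l.toFinset, dur v := (List.sum_toFinset dur hnd).symm
    rw [h1]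
    exact Finset.sum_le_sum_of_subset_of_nonneg (Finset.subset_univ _) (fun v _ _ => hdur v)
  have hmem0 : ∀ S : Set V, (0:ℝ) ∈ {x | ∃ l : List V, l.Chain' r ∧ (∀ v ∈ l, v ∈ S) ∧ x = (l.map dur).sum} :=
    fun S => ⟨[], List.isChain_nil, by simp, by simp⟩
  have hCP_nonneg : ∀ S : Set V, 0 ≤ CPLen r dur S := fun S => le_csSup (hbdd S) (hmem0 S)
  have hchain_le : ∀ (S : Set V) (l : List V), l.Chain' r → (∀ v ∈ l, v ∈ S) →
      (l.map dur).sum ≤ CPLen r dur S := fun S l hl hm => le_csSup (hbdd S) ⟨l, hl, hm, rfl⟩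
  haveI : IsTrans V (fun a b => idx a ≤ idx b) := ⟨fun a b c => le_trans⟩
  -- key lemma
  have key : ∀ n : ℕ, ∀ l : List V, ∀ s : Finset (Fin m), l.length ≤ n → l.Chain' r →
      (∀ v ∈ l, idx v ∈ s) → (l.map dur).sum ≤ ∑ i ∈ s, CPLen r dur (↑(G i)) := by
    intro n
    induction n with
    | zero =>
      intro l s hlen _ _
      have : l = [] := List.length_eq_zero_iff.mp (Nat.le_zero.mp hlen)
      subst this
      simpa using Finset.sum_nonneg fun i _ => hCP_nonneg _
    | succ n ih =>
      intro l s hlen hch hmem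
      match l with
      | [] => simpa using Finset.sum_nonneg fun i _ => hCP_nonneg _
      | v :: t =>
        set i₀ := idx v with hi₀
        set p : V → Bool := fun w => decide (idx w = i₀) with hp
        have hsplit : v :: t = (v :: t.takeWhile p) ++ t.dropWhile p := by
          simp [List.takeWhile_append_dropWhile]
        have hpre : (v :: t.takeWhile p) <+: v :: t := ⟨t.dropWhile p, hsplit.symm⟩
        have hsuf : t.dropWhile p <:+ v :: t := ⟨v :: t.takeWhile p, hsplit.symm⟩
        have hch₁ : (v :: t.takeWhile p).Chain' r := hch.prefix hpre
        have hch₂ : (t.dropWhile p).Chain' r := hch.suffix hsuf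
        have hpw : (v :: t).Pairwise (fun a b => idx a ≤ idx b) :=
          List.isChain_iff_pairwise.mp (hch.imp fun _ _ h => hmono _ _ h)
        have hpw₂ : (t.dropWhile p).Pairwise (fun a b => idx a ≤ idx b) :=
          List.isChain_iff_pairwise.mp (hch₂.imp fun _ _ h => hmono _ _ h)
        have hm₁ : ∀ w ∈ (v :: t.takeWhile p), w ∈ (↑(G i₀) : Set V) := by
          intro w hw
          rcases List.mem_cons.mp hw with rfl | hw
          · exact_mod_cast hidx w
          · have h1 := List.mem_takeWhile_imp hw
            have h2 : idx w = i₀ := of_decide_eq_true h1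
            simpa using h2 ▸ hidx w
        have hm₂ : ∀ w ∈ t.dropWhile p, idx w ∈ s.erase i₀ := by
          intro w hw
          have hwt : w ∈ t := (List.dropWhile_sublist p).subset hw
          have hws : idx w ∈ s := hmem w (List.mem_cons_of_mem _ hwt)
          refine Finset.mem_erase.mpr ⟨?_, hws⟩
          rcases hl2e : t.dropWhile p with _ | ⟨h₂, t₂⟩
          · rw [hl2e] at hw; simp at hw
          · have hh₂ : ¬ p h₂ = true := by
              have hne' : t.dropWhile p ≠ [] := by rw [hl2e]; simp
              have := List.head_dropWhile_not p hne'
              rw [show (t.dropWhile p).head hne' = h₂ by simp [hl2e]] at this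
              simp [this]
            have hne₂ : idx h₂ ≠ i₀ := fun h => hh₂ (by simp [hp, h])
            have hht : h₂ ∈ t := (List.dropWhile_sublist p).subset (by rw [hl2e]; exact List.mem_cons_self)
            have hle : i₀ ≤ idx h₂ := (List.pairwise_cons.mp hpw).1 h₂ hht
            have hlt : i₀ < idx h₂ := lt_of_le_of_ne hle (Ne.symm hne₂)
            rw [hl2e] at hw hpw₂
            rcases List.mem_cons.mp hw with rfl | hw'
            · exact hne₂
            · have hle2 : idx h₂ ≤ idx w := (List.pairwise_cons.mp hpw₂).1 w hw'
              exact fun h => absurd (h ▸ hle2) (not_le.mpr hlt)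
        have hi₀s : i₀ ∈ s := hmem v (List.mem_cons_self)
        have hlen₂ : (t.dropWhile p).length ≤ n := by
          have h1 : (t.dropWhile p).length ≤ t.length := (List.dropWhile_sublist p).length_le
          have h2 : t.length ≤ n := by simpa using Nat.succ_le_succ_iff.mp hlen
          exact h1.trans h2
        have ih₂ := ih (t.dropWhile p) (s.erase i₀) hlen₂ hch₂ hm₂
        have h₁ : ((v :: t.takeWhile p).map dur).sum ≤ CPLen r dur (↑(G i₀)) :=
          hchain_le _ _ hch₁ hm₁
        calc ((v :: t).map dur).sum
            = ((v :: t.takeWhile p).map dur).sum + ((t.dropWhile p).map dur).sum := by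
              rw [hsplit, List.map_append, List.sum_append]
          _ ≤ CPLen r dur (↑(G i₀)) + ∑ i ∈ s.erase i₀, CPLen r dur (↑(G i)) :=
              add_le_add h₁ ih₂
          _ = ∑ i ∈ s, CPLen r dur (↑(G i)) :=
              Finset.add_sum_erase s (fun i => CPLen r dur (↑(G i))) hi₀s
  -- conclude
  have hCP : CPLen r dur Set.univ ≤ ∑ i, max (CPLen r dur (↑(G i))) (TWork dur dem C (G i)) := by
    refine csSup_le ⟨0, hmem0 _⟩ ?_
    rintro x ⟨l, hl, -, rfl⟩
    refine (key l.length l Finset.univ le_rfl hl (fun v _ => Finset.mem_univ _)).trans ?_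
    exact Finset.sum_le_sum fun i _ => le_max_left _ _
  have hTW : TWork dur dem C Finset.univ ≤ ∑ i, max (CPLen r dur (↑(G i))) (TWork dur dem C (G i)) := by
    have hunion : (Finset.univ : Finset V) = (Finset.univ : Finset (Fin m)).biUnion G := by
      ext v; simpa using hcover v
    have : TWork dur dem C Finset.univ = ∑ i, TWork dur dem C (G i) := by
      unfold TWork
      rw [hunion, Finset.sum_biUnion (fun i _ j _ hij => hdisj i j hij), Finset.sum_div]
    rw [this]
    exact Finset.sum_le_sum fun i _ => le_max_right _ _
  exact max_le hCP hTW
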